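/- Let n be a natural number, α : (Fin n → ℝ) → Matrix (Fin n) (Fin n) ℝ be C¹, antisymmetric (α^{jk} = −α^{kj}) and satisfying the Jacobi identity Σ_i (∂_i α^{jk})α^{im} + Σ_i (∂_i α^{km})α^{ij} + Σ_i (∂_i α^{mj})α^{ik} = 0 everywhere, and let X, ξ : ℝ → (Fin n → ℝ) be differentiable. With the operators (Aψ)_m := −ψ_m' + Σ_{k,s} (∂_m α^{ks})(X)·ξ_s·ψ_k, (Bψ)^j := Σ_m α^{jm}(X)·ψ_m, (A*η)^j := −(η^j)' − Σ_{i,s} (∂_i α^{js})(X)·ξ_s·η^i, define the constraints F^j(φ) := (X^j)'(φ) + Σ_s α^{js}(X(φ))·ξ_s(φ). Then: (a) if F^j(φ) = 0 for all j and φ, then B(Aψ) = A*(Bψ) for every differentiable ψ : ℝ → (Fin n → ℝ); (b) conversely, if B(Aψ) = A*(Bψ) for every differentiable ψ, and there exists an index m₀ such that the n×n matrix (i,j) ↦ (∂_i α^{j m₀})(X(φ)) is invertible for every φ, then F^j(φ) = 0 for all j and φ. -/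

import Mathlib

open scoped BigOperators

/-- The operator `A` of the Poisson sigma-model linear system:
`(Aψ)_m = −ψ_m' + Σ_{k,s} (∂_m α^{ks})(X)·ξ_s·ψ_k`. -/
noncomputable def opA {n : ℕ} (α : (Fin n → ℝ) → Matrix (Fin n) (Fin n) ℝ)
    (X ξ ψ : ℝ → Fin n → ℝ) : ℝ → Fin n → ℝ :=
  fun φ m => -(deriv (fun t => ψ t m) φ)
    + ∑ k, ∑ s, fderiv ℝ (fun y => α y k s) (X φ) (Pi.single m 1) * ξ φ s * ψ φ k

/-- The operator `B` of the Poisson sigma-model linear system: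
`(Bψ)^j = Σ_m α^{jm}(X)·ψ_m`. -/
noncomputable def opB {n : ℕ} (α : (Fin n → ℝ) → Matrix (Fin n) (Fin n) ℝ)
    (X ψ : ℝ → Fin n → ℝ) : ℝ → Fin n → ℝ :=
  fun φ j => ∑ m, α (X φ) j m * ψ φ m

/-- The dual operator `A*`:
`(A*η)^j = −(η^j)' − Σ_{i,s} (∂_i α^{js})(X)·ξ_s·η^i`. -/
noncomputable def opAstar {n : ℕ} (α : (Fin n → ℝ) → Matrix (Fin n) (Fin n) ℝ)
    (X ξ η : ℝ → Fin n → ℝ) : ℝ → Fin n → ℝ :=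
  fun φ j => -(deriv (fun t => η t j) φ)
    - ∑ i, ∑ s, fderiv ℝ (fun y => α y j s) (X φ) (Pi.single i 1) * ξ φ s * η φ i

lemma deriv_comp_X {n : ℕ} (f : (Fin n → ℝ) → ℝ) (hf : Differentiable ℝ f)
    (X : ℝ → Fin n → ℝ) (hX : Differentiable ℝ X) (φ : ℝ) :
    deriv (fun t => f (X t)) φ
      = ∑ i, deriv (fun t => X t i) φ * fderiv ℝ f (X φ) (Pi.single i 1) := by
  have hXf : HasFDerivAt X (fderiv ℝ X φ) φ := (hX φ).hasFDerivAt
  have hcomp : HasDerivAt (fun t => f (X t)) (fderiv ℝ f (X φ) (fderiv ℝ X φ 1)) φ := by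
    have := ((hf (X φ)).hasFDerivAt.comp φ hXf).hasDerivAt
    exact this
  rw [hcomp.deriv]
  have hXi : ∀ i, (fderiv ℝ X φ) 1 i = deriv (fun t => X t i) φ := by
    intro i
    have h := ((ContinuousLinearMap.proj (R := ℝ) (φ := fun _ : Fin n => ℝ) i).hasFDerivAt.comp φ hXf).hasDerivAt
    have : HasDerivAt (fun t => X t i) ((fderiv ℝ X φ) 1 i) φ := by exact h
    exact this.deriv.symm
  have hv : (fderiv ℝ X φ) 1 = ∑ i, ((fderiv ℝ X φ 1 i) • (Pi.single i 1 : Fin n → ℝ)) := by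
    funext j
    rw [Finset.sum_apply]
    simp [Pi.single_apply]
  rw [hv, map_sum]
  refine Finset.sum_congr rfl fun i _ => ?_
  rw [map_smul, hXi i]
  simp [smul_eq_mul]


open Finset in
lemma PSM_alg {n : ℕ} (a : Matrix (Fin n) (Fin n) ℝ) (g : Fin n → Fin n → Fin n → ℝ)
    (u p x' dp : Fin n → ℝ) (j : Fin n)
    (hjac : ∀ m s, ∑ i, (a j i * g i m s + g i j s * a i m) = ∑ i, g i j m * a i s) :
    ∑ m, a j m * (-(dp m) + ∑ k, ∑ s, g m k s * u s * p k)
      = (-(∑ m, ((∑ i, x' i * g i j m) * p m + a j m * dp m))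
         - ∑ i, ∑ s, g i j s * u s * ∑ m, a i m * p m)
        + ∑ m, p m * ∑ i, g i j m * (x' i + ∑ s, a i s * u s) := by
  have swap3 : ∀ F : Fin n → Fin n → Fin n → ℝ,
      ∑ i, ∑ m, ∑ s, F i m s = ∑ m, ∑ s, ∑ i, F i m s := by
    intro F
    rw [Finset.sum_comm]
    exact Finset.sum_congr rfl fun m _ => Finset.sum_comm
  have hT1 : ∑ m, a j m * (∑ k, ∑ s, g m k s * u s * p k)
      = ∑ m, ∑ s, (∑ i, a j i * g i m s) * (u s * p m) := by
    have e1 : ∑ m, a j m * (∑ k, ∑ s, g m k s * u s * p k)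
        = ∑ i, ∑ m, ∑ s, a j i * g i m s * (u s * p m) := by
      simp only [Finset.mul_sum]
      exact Finset.sum_congr rfl fun i _ => Finset.sum_congr rfl fun m _ =>
        Finset.sum_congr rfl fun s _ => by ring
    rw [e1, swap3]
    exact Finset.sum_congr rfl fun m _ => Finset.sum_congr rfl fun s _ =>
      (Finset.sum_mul _ _ _).symm
  have hT2 : ∑ i, ∑ s, g i j s * u s * ∑ m, a i m * p m
      = ∑ m, ∑ s, (∑ i, g i j s * a i m) * (u s * p m) := by
    have e1 : ∑ i, ∑ s, g i j s * u s * ∑ m, a i m * p m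
        = ∑ i, ∑ m, ∑ s, g i j s * a i m * (u s * p m) := by
      refine Finset.sum_congr rfl fun i _ => ?_
      rw [Finset.sum_comm]
      simp only [Finset.mul_sum]
      exact Finset.sum_congr rfl fun m _ => Finset.sum_congr rfl fun s _ => by ring
    rw [e1, swap3]
    exact Finset.sum_congr rfl fun m _ => Finset.sum_congr rfl fun s _ =>
      (Finset.sum_mul _ _ _).symm
  have hm : ∀ m, p m * ∑ i, g i j m * (x' i + ∑ s, a i s * u s)
      = (∑ i, x' i * g i j m) * p m + ∑ s, (∑ i, g i j m * a i s) * (u s * p m) := by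
    intro m
    have h1 : ∑ i, g i j m * (x' i + ∑ s, a i s * u s)
        = (∑ i, g i j m * x' i) + ∑ i, ∑ s, g i j m * (a i s * u s) := by
      rw [← Finset.sum_add_distrib]
      exact Finset.sum_congr rfl fun i _ => by rw [mul_add, Finset.mul_sum]
    rw [h1, mul_add]
    congr 1
    · rw [Finset.mul_sum, Finset.sum_mul]
      exact Finset.sum_congr rfl fun i _ => by ring
    · simp only [Finset.mul_sum]
      rw [Finset.sum_comm]
      refine Finset.sum_congr rfl fun s _ => ?_
      rw [Finset.sum_mul]
      exact Finset.sum_congr rfl fun i _ => by ring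
  have hR0 : ∑ m, p m * ∑ i, g i j m * (x' i + ∑ s, a i s * u s)
      = ∑ m, (∑ i, x' i * g i j m) * p m
        + ∑ m, ∑ s, (∑ i, g i j m * a i s) * (u s * p m) := by
    rw [← Finset.sum_add_distrib]
    exact Finset.sum_congr rfl fun m _ => hm m
  have hL : ∑ m, a j m * (-(dp m) + ∑ k, ∑ s, g m k s * u s * p k)
      = -(∑ m, a j m * dp m) + ∑ m, ∑ s, (∑ i, a j i * g i m s) * (u s * p m) := by
    rw [← hT1, ← Finset.sum_neg_distrib, ← Finset.sum_add_distrib]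
    exact Finset.sum_congr rfl fun m _ => by ring
  have hPT2R : (∑ m, ∑ s, (∑ i, a j i * g i m s) * (u s * p m))
      + (∑ m, ∑ s, (∑ i, g i j s * a i m) * (u s * p m))
      = ∑ m, ∑ s, (∑ i, g i j m * a i s) * (u s * p m) := by
    rw [← Finset.sum_add_distrib]
    refine Finset.sum_congr rfl fun m _ => ?_
    rw [← Finset.sum_add_distrib]
    refine Finset.sum_congr rfl fun s _ => ?_
    rw [← add_mul, ← Finset.sum_add_distrib, hjac]
  have hsplit : ∑ m, ((∑ i, x' i * g i j m) * p m + a j m * dp m)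
      = ∑ m, (∑ i, x' i * g i j m) * p m + ∑ m, a j m * dp m :=
    Finset.sum_add_distrib
  rw [hL, hR0, hT2, hsplit]
  linarith [hPT2R]


lemma PSM_gneg {n : ℕ} (α : (Fin n → ℝ) → Matrix (Fin n) (Fin n) ℝ)
    (hanti : ∀ (x : Fin n → ℝ) (j k : Fin n), α x j k = -α x k j)
    (x : Fin n → ℝ) (a b : Fin n) (v : Fin n → ℝ) :
    fderiv ℝ (fun y => α y a b) x v = -(fderiv ℝ (fun y => α y b a) x v) := by
  have h : (fun y => α y a b) = fun y => -(α y b a) := funext fun y => hanti y a b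
  rw [h, fderiv_fun_neg]
  simp

lemma PSM_jac {n : ℕ} (α : (Fin n → ℝ) → Matrix (Fin n) (Fin n) ℝ)
    (hanti : ∀ (x : Fin n → ℝ) (j k : Fin n), α x j k = -α x k j)
    (hJacobi : ∀ (x : Fin n → ℝ) (j k m : Fin n),
      (∑ i, fderiv ℝ (fun y => α y j k) x (Pi.single i 1) * α x i m)
      + (∑ i, fderiv ℝ (fun y => α y k m) x (Pi.single i 1) * α x i j)
      + (∑ i, fderiv ℝ (fun y => α y m j) x (Pi.single i 1) * α x i k) = 0)
    (x : Fin n → ℝ) (j m s : Fin n) :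
    ∑ i, (α x j i * fderiv ℝ (fun y => α y m s) x (Pi.single i 1)
          + fderiv ℝ (fun y => α y j s) x (Pi.single i 1) * α x i m)
      = ∑ i, fderiv ℝ (fun y => α y j m) x (Pi.single i 1) * α x i s := by
  have hJ := hJacobi x j s m
  have hdiff : ∑ i, (α x j i * fderiv ℝ (fun y => α y m s) x (Pi.single i 1)
          + fderiv ℝ (fun y => α y j s) x (Pi.single i 1) * α x i m)
      - ∑ i, fderiv ℝ (fun y => α y j m) x (Pi.single i 1) * α x i s
      = (∑ i, fderiv ℝ (fun y => α y j s) x (Pi.single i 1) * α x i m)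
        + (∑ i, fderiv ℝ (fun y => α y s m) x (Pi.single i 1) * α x i j)
        + (∑ i, fderiv ℝ (fun y => α y m j) x (Pi.single i 1) * α x i s) := by
    rw [← Finset.sum_sub_distrib, ← Finset.sum_add_distrib, ← Finset.sum_add_distrib]
    refine Finset.sum_congr rfl fun i _ => ?_
    rw [hanti x j i, PSM_gneg α hanti x m s, PSM_gneg α hanti x j m]
    ring
  linarith [hdiff, hJ]


lemma PSM_key {n : ℕ} (α : (Fin n → ℝ) → Matrix (Fin n) (Fin n) ℝ)
    (hα : ∀ j k, ContDiff ℝ 1 (fun x => α x j k))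
    (hanti : ∀ (x : Fin n → ℝ) (j k : Fin n), α x j k = -α x k j)
    (hJacobi : ∀ (x : Fin n → ℝ) (j k m : Fin n),
      (∑ i, fderiv ℝ (fun y => α y j k) x (Pi.single i 1) * α x i m)
      + (∑ i, fderiv ℝ (fun y => α y k m) x (Pi.single i 1) * α x i j)
      + (∑ i, fderiv ℝ (fun y => α y m j) x (Pi.single i 1) * α x i k) = 0)
    (X ξ : ℝ → Fin n → ℝ) (hX : Differentiable ℝ X)
    (ψ : ℝ → Fin n → ℝ) (hψ : Differentiable ℝ ψ) (φ : ℝ) (j : Fin n) :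
    opB α X (opA α X ξ ψ) φ j
      = opAstar α X ξ (opB α X ψ) φ j
        + ∑ m, ψ φ m * ∑ i, fderiv ℝ (fun y => α y j m) (X φ) (Pi.single i 1)
            * (deriv (fun t => X t i) φ + ∑ s, α (X φ) i s * ξ φ s) := by
  have hψm : ∀ m, Differentiable ℝ (fun t => ψ t m) := fun m => by
    exact (ContinuousLinearMap.proj (R := ℝ) (φ := fun _ : Fin n => ℝ) m).differentiable.comp hψ
  have hαX : ∀ a b, Differentiable ℝ (fun t => α (X t) a b) := fun a b =>
    ((hα a b).differentiable one_ne_zero).comp hX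
  have hdB : deriv (fun t => ∑ m, α (X t) j m * ψ t m) φ
      = ∑ m, ((∑ i, deriv (fun t => X t i) φ
              * fderiv ℝ (fun y => α y j m) (X φ) (Pi.single i 1)) * ψ φ m
            + α (X φ) j m * deriv (fun t => ψ t m) φ) := by
    rw [deriv_fun_sum (A := fun m t => α (X t) j m * ψ t m) (fun m _ => ((hαX j m) φ).mul ((hψm m) φ))]
    refine Finset.sum_congr rfl fun m _ => ?_
    rw [deriv_fun_mul ((hαX j m) φ) ((hψm m) φ),
      deriv_comp_X (fun y => α y j m) ((hα j m).differentiable one_ne_zero) X hX φ]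
  simp only [opA, opB, opAstar]
  rw [hdB]
  exact PSM_alg (α (X φ))
    (fun i a b => fderiv ℝ (fun y => α y a b) (X φ) (Pi.single i 1))
    (ξ φ) (ψ φ) (fun i => deriv (fun t => X t i) φ) (fun m => deriv (fun t => ψ t m) φ) j
    (fun m s => PSM_jac α hanti hJacobi (X φ) j m s)


/-- Lemma 5.1 of the paper: in the Poisson sigma-model, the first-class
constraints `F^j = ∂_φ X^j + α^{jk}(X) ξ_k = 0` are exactly the consistency
conditions `B∘A = A*∘B` of the linear system, the converse direction needing
the non-degeneracy of the matrix `∂_i α^{j m₀}(X)` for some `m₀`. -/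
theorem poisson_sigma_constraints_iff_consistency
    (n : ℕ) (α : (Fin n → ℝ) → Matrix (Fin n) (Fin n) ℝ)
    (hα : ∀ j k, ContDiff ℝ 1 (fun x => α x j k))
    (hanti : ∀ (x : Fin n → ℝ) (j k : Fin n), α x j k = -α x k j)
    (hJacobi : ∀ (x : Fin n → ℝ) (j k m : Fin n),
      (∑ i, fderiv ℝ (fun y => α y j k) x (Pi.single i 1) * α x i m)
      + (∑ i, fderiv ℝ (fun y => α y k m) x (Pi.single i 1) * α x i j)
      + (∑ i, fderiv ℝ (fun y => α y m j) x (Pi.single i 1) * α x i k) = 0)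
    (X ξ : ℝ → Fin n → ℝ) (hX : Differentiable ℝ X) (hξ : Differentiable ℝ ξ) :
    ((∀ (j : Fin n) (φ : ℝ),
        deriv (fun t => X t j) φ + (∑ s, α (X φ) j s * ξ φ s) = 0) →
      ∀ ψ : ℝ → Fin n → ℝ, Differentiable ℝ ψ →
        opB α X (opA α X ξ ψ) = opAstar α X ξ (opB α X ψ))
    ∧ ((∀ ψ : ℝ → Fin n → ℝ, Differentiable ℝ ψ →
        opB α X (opA α X ξ ψ) = opAstar α X ξ (opB α X ψ)) →
      (∃ m₀ : Fin n, ∀ φ : ℝ,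
        IsUnit (Matrix.of fun i j : Fin n =>
          fderiv ℝ (fun y => α y j m₀) (X φ) (Pi.single i 1))) →
      ∀ (j : Fin n) (φ : ℝ),
        deriv (fun t => X t j) φ + (∑ s, α (X φ) j s * ξ φ s) = 0) := by

  constructor
  · intro hF ψ hψ
    funext φ j
    rw [PSM_key α hα hanti hJacobi X ξ hX ψ hψ φ j]
    simp [hF]
  · rintro hcons ⟨m₀, hm⟩ j φ
    set F : Fin n → ℝ :=
      fun i => deriv (fun t => X t i) φ + ∑ s, α (X φ) i s * ξ φ s with hFdef
    set M : Matrix (Fin n) (Fin n) ℝ :=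
      Matrix.of fun i j : Fin n =>
        fderiv ℝ (fun y => α y j m₀) (X φ) (Pi.single i 1) with hMdef
    have h0 : ∀ j' : Fin n, ∑ i, M i j' * F i = 0 := by
      intro j'
      have hψc : Differentiable ℝ (fun _ : ℝ => (Pi.single m₀ 1 : Fin n → ℝ)) :=
        differentiable_const _
      have heq := congrFun (congrFun (hcons _ hψc) φ) j'
      have hk := PSM_key α hα hanti hJacobi X ξ hX _ hψc φ j'
      have hz : ∑ m, (Pi.single m₀ 1 : Fin n → ℝ) m
          * ∑ i, fderiv ℝ (fun y => α y j' m) (X φ) (Pi.single i 1)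
              * (deriv (fun t => X t i) φ + ∑ s, α (X φ) i s * ξ φ s) = 0 := by
        have := hk.symm.trans heq
        linarith [this]
      have hz' : ∑ i, fderiv ℝ (fun y => α y j' m₀) (X φ) (Pi.single i 1)
          * (deriv (fun t => X t i) φ + ∑ s, α (X φ) i s * ξ φ s) = 0 := by
        rw [Finset.sum_eq_single m₀] at hz
        · simpa using hz
        · intro b _ hb
          simp [Pi.single_apply, hb]
        · simp
      simpa [hMdef, hFdef] using hz'
    have hvm : Matrix.vecMul F M = 0 := by
      funext j'
      rw [Matrix.vecMul, dotProduct]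
      rw [show (0 : Fin n → ℝ) j' = 0 from rfl, ← h0 j']
      exact Finset.sum_congr rfl fun i _ => by ring
    have hMd : IsUnit M.det := (Matrix.isUnit_iff_isUnit_det M).mp (hm φ)
    have hF0 : F = 0 := by
      have h1 : F = Matrix.vecMul F (M * M⁻¹) := by
        rw [Matrix.mul_nonsing_inv M hMd, Matrix.vecMul_one]
      rw [← Matrix.vecMul_vecMul, hvm] at h1
      simpa using h1
    exact congrFun hF0 j
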